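/- (Haemers incidence bound, consequence form) Let S be a set of points and L a set of k-flats in F_q^n, each flat of L containing at least δ·q^k points of S, with |L| = γ·q^{n−k}·C(n,k)_q and κ = γ·q^k. Then |S| ≥ (δκ/(κ+1) − √(δ(1−δ)/κ)) · q^n, assuming the incidence bound I(S,L) ≤ q^{k−n}|S||L| + √(q^k · C(n−1,k)_q · |S| · |L| · (1 − q^{−n}|S|)) and C(n,k)_q > q^k·C(n−1,k)_q. -/

import Mathlib

set_option maxHeartbeats 800000


/-- The q-binomial coefficient `C(n,k)_q = ∏_{i=0}^{k-1} (q^{n-i} - 1)/(q^{k-i} - 1)`,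
as a real number. -/
noncomputable def qBinom (q n k : ℕ) : ℝ :=
  ∏ i ∈ Finset.range k, ((q : ℝ) ^ (n - i) - 1) / ((q : ℝ) ^ (k - i) - 1)

lemma qBinom_pos {q n k : ℕ} (hq : 2 ≤ q) (hkn : k ≤ n) : 0 < qBinom q n k := by
  apply Finset.prod_pos
  intro i hi
  rw [Finset.mem_range] at hi
  have hq1 : (1 : ℝ) < (q : ℝ) := by exact_mod_cast hq
  have h1 : (1 : ℝ) < (q : ℝ) ^ (k - i) := one_lt_pow₀ hq1 (by omega)
  have h2 : (1 : ℝ) < (q : ℝ) ^ (n - i) := one_lt_pow₀ hq1 (by omega)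
  exact div_pos (by linarith) (by linarith)

open Classical in
/-- Haemers incidence bound, consequence form: if every flat of a set `L` of `k`-flats
contains at least `δ·q^k` points of `S`, `|L| = γ·q^{n−k}·C(n,k)_q`, `κ = γ·q^k`,
and the incidence bound `I(S,L) ≤ q^{k−n}|S||L| + √(q^k·C(n−1,k)_q·|S|·|L|·(1−q^{−n}|S|))`
holds together with `C(n,k)_q > q^k·C(n−1,k)_q`, then
`|S| ≥ (δκ/(κ+1) − √(δ(1−δ)/κ))·q^n`. -/
theorem haemers_consequence {F : Type*} [Field F] [Fintype F] (q n k : ℕ)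
    (hq : Fintype.card F = q) (hk : 1 ≤ k) (hkn : k < n)
    (δ γ κ : ℝ) (hδ0 : 0 < δ) (hδ1 : δ ≤ 1) (hγ : 0 < γ)
    (S : Finset (Fin n → F)) (L : Finset (Set (Fin n → F)))
    (hflat : ∀ ℓ ∈ L, ∃ (W : Submodule F (Fin n → F)) (v : Fin n → F),
      Module.finrank F W = k ∧ ℓ = (fun x => v + x) '' (W : Set (Fin n → F)))
    (hrich : ∀ ℓ ∈ L, δ * (q : ℝ) ^ k ≤ ((S.filter (fun p => p ∈ ℓ)).card : ℝ))
    (hL : (L.card : ℝ) = γ * (q : ℝ) ^ (n - k) * qBinom q n k)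
    (hκ : κ = γ * (q : ℝ) ^ k)
    (hSsmall : (S.card : ℝ) < δ * (q : ℝ) ^ n)
    (hInc : (∑ ℓ ∈ L, ((S.filter (fun p => p ∈ ℓ)).card : ℝ)) ≤
      (S.card : ℝ) * L.card / (q : ℝ) ^ (n - k) +
        Real.sqrt ((q : ℝ) ^ k * qBinom q (n - 1) k * S.card * L.card *
          (1 - (S.card : ℝ) / (q : ℝ) ^ n)))
    (hqb : (q : ℝ) ^ k * qBinom q (n - 1) k < qBinom q n k) :
    (δ * κ / (κ + 1) - Real.sqrt (δ * (1 - δ) / κ)) * (q : ℝ) ^ n ≤ S.card := by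
  -- basic positivity facts
  have hq2 : 2 ≤ q := by
    rw [← hq]; exact Fintype.one_lt_card
  have hq1R : (1 : ℝ) < (q : ℝ) := by exact_mod_cast hq2
  have hq0 : (0 : ℝ) < (q : ℝ) := by linarith
  have hqk : (0 : ℝ) < (q : ℝ) ^ k := pow_pos hq0 k
  have hqn : (0 : ℝ) < (q : ℝ) ^ n := pow_pos hq0 n
  have hqnk : (0 : ℝ) < (q : ℝ) ^ (n - k) := pow_pos hq0 (n - k)
  have hpow : (q : ℝ) ^ (n - k) * (q : ℝ) ^ k = (q : ℝ) ^ n := by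
    rw [← pow_add]; congr 1; omega
  set C := qBinom q n k with hCdef
  set B := qBinom q (n - 1) k with hBdef
  have hC : 0 < C := qBinom_pos hq2 hkn.le
  have hLpos : 0 < (L.card : ℝ) := by rw [hL]; positivity
  set s : ℝ := (S.card : ℝ) with hsdef
  have hs0 : (0 : ℝ) ≤ s := Nat.cast_nonneg _
  set x : ℝ := s / (q : ℝ) ^ n with hxdef
  have hx0 : 0 ≤ x := by positivity
  have hseq : s = x * (q : ℝ) ^ n := by
    rw [hxdef, div_mul_cancel₀ _ (ne_of_gt hqn)]
  have hxδ : x < δ := by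
    rw [hxdef, div_lt_iff₀ hqn]; exact hSsmall
  have hκpos : 0 < κ := by rw [hκ]; positivity
  -- incidence lower bound
  have hIlow : δ * (q : ℝ) ^ k * L.card ≤
      ∑ ℓ ∈ L, ((S.filter (fun p => p ∈ ℓ)).card : ℝ) := by
    calc δ * (q : ℝ) ^ k * L.card = ∑ _ℓ ∈ L, δ * (q : ℝ) ^ k := by
          rw [Finset.sum_const, nsmul_eq_mul]; ring
      _ ≤ _ := Finset.sum_le_sum hrich
  have key : δ * (q : ℝ) ^ k * L.card ≤ s * L.card / (q : ℝ) ^ (n - k) +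
      Real.sqrt ((q : ℝ) ^ k * B * s * L.card * (1 - x)) :=
    le_trans hIlow hInc
  -- rewrite the left part
  have hdivrw : s * (L.card : ℝ) / (q : ℝ) ^ (n - k) = x * (q : ℝ) ^ k * L.card := by
    rw [hseq, ← hpow]; rw [div_eq_iff (ne_of_gt hqnk)]; ring
  have hA0 : 0 ≤ (q : ℝ) ^ k * L.card * (δ - x) := by
    have : 0 ≤ δ - x := by linarith
    exact mul_nonneg (mul_nonneg hqk.le hLpos.le) this
  have hAle : (q : ℝ) ^ k * L.card * (δ - x) ≤
      Real.sqrt ((q : ℝ) ^ k * B * s * L.card * (1 - x)) := by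
    rw [hdivrw] at key; nlinarith [key]
  have hR0 : 0 ≤ (q : ℝ) ^ k * B * s * L.card * (1 - x) := by
    have hB : 0 < B := qBinom_pos hq2 (by omega)
    have h1x : 0 ≤ 1 - x := by linarith
    exact mul_nonneg (mul_nonneg (mul_nonneg (mul_nonneg hqk.le hB.le) hs0) hLpos.le) h1x
  have hA2 : ((q : ℝ) ^ k * L.card * (δ - x)) ^ 2 ≤
      (q : ℝ) ^ k * B * s * L.card * (1 - x) := by
    have h := pow_le_pow_left₀ hA0 hAle 2
    rwa [Real.sq_sqrt hR0] at h
  -- cancel positive factors to get the core quadratic inequality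
  have h2 : (q : ℝ) ^ k * L.card * (δ - x) ^ 2 ≤ B * (x * (q : ℝ) ^ n) * (1 - x) := by
    rw [← mul_le_mul_iff_right₀ (mul_pos hqk hLpos)]
    calc (q : ℝ) ^ k * L.card * ((q : ℝ) ^ k * L.card * (δ - x) ^ 2)
        = ((q : ℝ) ^ k * L.card * (δ - x)) ^ 2 := by ring
      _ ≤ (q : ℝ) ^ k * B * s * L.card * (1 - x) := hA2
      _ = (q : ℝ) ^ k * L.card * (B * (x * (q : ℝ) ^ n) * (1 - x)) := by
          rw [hseq]; ring
  have h4 : γ * C * (δ - x) ^ 2 ≤ B * x * (1 - x) := by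
    rw [← mul_le_mul_iff_right₀ hqn]
    calc (q : ℝ) ^ n * (γ * C * (δ - x) ^ 2)
        = (q : ℝ) ^ k * ((γ * (q : ℝ) ^ (n - k) * C)) * (δ - x) ^ 2 := by
          rw [← hpow]; ring
      _ = (q : ℝ) ^ k * L.card * (δ - x) ^ 2 := by rw [hL]
      _ ≤ B * (x * (q : ℝ) ^ n) * (1 - x) := h2
      _ = (q : ℝ) ^ n * (B * x * (1 - x)) := by ring
  have hx1x : 0 ≤ x * (1 - x) := mul_nonneg hx0 (by linarith)
  have hmain : κ * (δ - x) ^ 2 ≤ x * (1 - x) := by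
    rw [← mul_le_mul_iff_right₀ hC]
    calc C * (κ * (δ - x) ^ 2) = (q : ℝ) ^ k * (γ * C * (δ - x) ^ 2) := by
          rw [hκ]; ring
      _ ≤ (q : ℝ) ^ k * (B * x * (1 - x)) :=
          mul_le_mul_of_nonneg_left h4 hqk.le
      _ = ((q : ℝ) ^ k * B) * (x * (1 - x)) := by ring
      _ ≤ C * (x * (1 - x)) := mul_le_mul_of_nonneg_right hqb.le hx1x
  -- conclude: it suffices to show the bound on x
  have hfinal : δ * κ / (κ + 1) - Real.sqrt (δ * (1 - δ) / κ) ≤ x := by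
    have hκ1 : (0 : ℝ) < κ + 1 := by linarith
    rcases le_or_gt (δ * κ / (κ + 1) - x) 0 with h | h
    · have := Real.sqrt_nonneg (δ * (1 - δ) / κ); linarith
    · have hxm : κ * δ - (κ + 1) * x ≥ 0 := by
        have := (lt_div_iff₀ hκ1).mp (by linarith : x < δ * κ / (κ + 1))
        nlinarith
      have hsq : (δ * κ / (κ + 1) - x) ^ 2 ≤ δ * (1 - δ) / κ := by
        rw [le_div_iff₀ hκpos]
        have hkey : κ * (κ * δ - (κ + 1) * x) ^ 2 ≤ δ * (1 - δ) * (κ + 1) ^ 2 := by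
          nlinarith [mul_le_mul_of_nonneg_left hmain (by positivity : (0:ℝ) ≤ κ * (κ + 1)),
            mul_nonneg hκpos.le hxm,
            mul_nonneg (mul_nonneg (by linarith : (0:ℝ) ≤ 2 * κ + 1) hδ0.le)
              (by linarith : (0:ℝ) ≤ 1 - δ)]
        calc (δ * κ / (κ + 1) - x) ^ 2 * κ
            = κ * (κ * δ - (κ + 1) * x) ^ 2 / (κ + 1) ^ 2 := by
              field_simp
          _ ≤ δ * (1 - δ) := by
              rw [div_le_iff₀ (by positivity)]; linarith
      have := (Real.le_sqrt h.le (div_nonneg (mul_nonneg hδ0.le (by linarith)) hκpos.le)).mpr hsq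
      linarith
  calc (δ * κ / (κ + 1) - Real.sqrt (δ * (1 - δ) / κ)) * (q : ℝ) ^ n
      ≤ x * (q : ℝ) ^ n := mul_le_mul_of_nonneg_right hfinal hqn.le
    _ = s := hseq.symm
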